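/- Suppose Hedge is run with learning rate η ∈ (0,1] on losses in [0,1], and after T rounds the cumulative mixability gap satisfies b(η) ≤ Δ_T(η) < b(η) + η/8 where b(η) = (1/η + 1/(e−1))·ln K. Then η ≥ √((e−1)·ln(K)/L_T^*), and the regret R(T) = Σ_t w_t·ℓ_t − L_T^* is bounded by R(T) < √(4/(e−1)·L_T^*·ln K) + ln(K)/(e−1) + 1/8. -/

import Mathlib

lemma key_main (x : ℝ) (hx0 : 0 ≤ x) (hx1 : x ≤ 1) :
    (Real.exp 1 - 1) + x ≤ Real.exp x * ((Real.exp 1 - 1) - (Real.exp 1 - 2) * x) := by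
  have he1 : Real.exp 1 < 2.7182818286 := Real.exp_one_lt_d9
  have he2 : (2.7182818283 : ℝ) < Real.exp 1 := Real.exp_one_gt_d9
  rcases le_or_gt x (4/5) with hc | hc
  · have hq : 1 + x + x^2/2 + x^3/6 ≤ Real.exp x := by
      have := Real.sum_le_exp_of_nonneg hx0 4
      simp [Finset.sum_range_succ, Nat.factorial] at this
      nlinarith [this]
    have hA : 0 < (Real.exp 1 - 1) - (Real.exp 1 - 2) * x := by nlinarith
    have hbr : 0 ≤ 3*(3 - Real.exp 1) + (5 - 2*Real.exp 1)*x - (Real.exp 1 - 2)*x^2 := by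
      nlinarith [mul_nonneg (sub_nonneg.2 hc) (show (0:ℝ) ≤ 2*Real.exp 1 - 5 by linarith),
        mul_nonneg (mul_nonneg (sub_nonneg.2 hc) (show (0:ℝ) ≤ 4/5 + x by linarith))
          (show (0:ℝ) ≤ Real.exp 1 - 2 by linarith)]
    nlinarith [mul_le_mul_of_nonneg_right hq hA.le, mul_nonneg (sq_nonneg x) hbr]
  · set s := 1 - x with hs
    have hs0 : 0 ≤ s := by simp [hs]; linarith
    have hs1 : s ≤ 1/5 := by simp [hs]; linarith
    have hU : Real.exp s ≤ 1 + s + s^2/2 + (2/9) * s^3 := by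
      have := Real.exp_bound' hs0 (by linarith) (n := 3) (by norm_num)
      simp [Finset.sum_range_succ, Nat.factorial] at this
      nlinarith [this]
    have hEs : 0 < Real.exp s := Real.exp_pos s
    have hprod : Real.exp x * Real.exp s = Real.exp 1 := by
      rw [← Real.exp_add]; norm_num [hs]
    have hbr2 : 0 ≤ (Real.exp 1^2 - 3*Real.exp 1 + 1) - (Real.exp 1/2 - 1)*s
        - (2*Real.exp 1/9 - 1/2)*s^2 + (2/9)*s^3 := by
      nlinarith [mul_nonneg (sub_nonneg.2 hs1) (show (0:ℝ) ≤ Real.exp 1/2 - 1 by linarith),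
        mul_nonneg (mul_nonneg (sub_nonneg.2 hs1) (show (0:ℝ) ≤ 1/5 + s by linarith))
          (show (0:ℝ) ≤ 2*Real.exp 1/9 - 1/2 by linarith),
        mul_nonneg (mul_nonneg hs0 hs0) hs0,
        mul_pos (sub_pos.2 he2) (sub_pos.2 he2)]
    have hB : 0 < Real.exp 1 - 1 + x := by nlinarith
    have hpoly : (Real.exp 1 - 1 + x) * (1 + s + s^2/2 + (2/9)*s^3)
        ≤ Real.exp 1 * ((Real.exp 1 - 1) - (Real.exp 1 - 2) * x) := by
      have hx' : x = 1 - s := by rw [hs]; ring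
      rw [hx']
      nlinarith [mul_nonneg hs0 hbr2]
    have h2 : (Real.exp 1 - 1 + x) * Real.exp s
        ≤ (Real.exp x * ((Real.exp 1 - 1) - (Real.exp 1 - 2) * x)) * Real.exp s := by
      calc (Real.exp 1 - 1 + x) * Real.exp s
          ≤ (Real.exp 1 - 1 + x) * (1 + s + s^2/2 + (2/9)*s^3) :=
            mul_le_mul_of_nonneg_left hU hB.le
        _ ≤ Real.exp 1 * ((Real.exp 1 - 1) - (Real.exp 1 - 2) * x) := hpoly
        _ = (Real.exp x * ((Real.exp 1 - 1) - (Real.exp 1 - 2) * x)) * Real.exp s := by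
            rw [← hprod]; ring
    linarith [(mul_le_mul_iff_of_pos_right hEs).1 h2]

lemma key_ineq (η : ℝ) (h0 : 0 < η) (h1 : η ≤ 1) :
    (Real.exp 1 - 1) * η ≤ (Real.exp 1 - 1 + η) * (1 - Real.exp (-η)) := by
  have M := key_main η h0.le h1
  have h3 := mul_le_mul_of_nonneg_left M (Real.exp_pos (-η)).le
  have h4 : Real.exp (-η) * (Real.exp η * ((Real.exp 1 - 1) - (Real.exp 1 - 2) * η))
      = (Real.exp 1 - 1) - (Real.exp 1 - 2) * η := by
    rw [← mul_assoc, ← Real.exp_add]; simp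
  rw [h4] at h3
  nlinarith [h3]

set_option maxHeartbeats 2000000 in
theorem hedge_budget_regret (K T : ℕ) (hK : 2 ≤ K)
    (ℓ : ℕ → Fin K → ℝ) (η : ℝ) (hη : η ∈ Set.Ioc (0:ℝ) 1)
    (hℓ : ∀ t k, ℓ t k ∈ Set.Icc (0:ℝ) 1)
    (L : ℕ → Fin K → ℝ) (hL : ∀ t k, L t k = ∑ s ∈ Finset.range t, ℓ s k)
    (w : ℕ → Fin K → ℝ)
    (hw : ∀ t k, w t k = Real.exp (-η * L t k) / ∑ k', Real.exp (-η * L t k'))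
    (Lstar Δ : ℝ)
    (hLstar : Lstar = Finset.univ.inf' (Finset.univ_nonempty_iff.2 ⟨⟨0, by omega⟩⟩) (L T))
    (hΔ : Δ = ∑ t ∈ Finset.range T,
        ((∑ k, w t k * ℓ t k) + (1/η) * Real.log (∑ k, w t k * Real.exp (-η * ℓ t k))))
    (hist : (1/η + 1/(Real.exp 1 - 1)) * Real.log K ≤ Δ)
    (hist' : Δ < (1/η + 1/(Real.exp 1 - 1)) * Real.log K + η/8) :
    η ≥ Real.sqrt ((Real.exp 1 - 1) * Real.log K / Lstar) ∧
    (∑ t ∈ Finset.range T, ∑ k, w t k * ℓ t k) - Lstar <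
      Real.sqrt (4/(Real.exp 1 - 1) * Lstar * Real.log K)
        + Real.log K / (Real.exp 1 - 1) + 1/8 := by
  obtain ⟨hη0, hη1⟩ := hη
  have hepos : 0 < Real.exp 1 - 1 := by nlinarith [Real.exp_one_gt_d9]
  have hlogK : 0 < Real.log K := Real.log_pos (by exact_mod_cast hK.trans_lt' one_lt_two)
  have hne : (Finset.univ : Finset (Fin K)).Nonempty :=
    Finset.univ_nonempty_iff.2 ⟨⟨0, by omega⟩⟩
  set Z : ℕ → ℝ := fun t => ∑ k', Real.exp (-η * L t k') with hZdef
  have hZpos : ∀ t, 0 < Z t := by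
    intro t; simp only [hZdef]
    exact Finset.sum_pos (fun k _ => Real.exp_pos _) hne
  have hw1 : ∀ t, ∑ k, w t k = 1 := by
    intro t
    have := hZpos t
    simp only [hZdef] at this
    simp only [hw]
    rw [← Finset.sum_div, div_self this.ne']
  have hwpos : ∀ t k, 0 < w t k := by
    intro t k
    rw [hw]
    have := hZpos t
    simp only [hZdef] at this
    positivity
  have hLsucc : ∀ t k, L (t+1) k = L t k + ℓ t k := by
    intro t k; rw [hL, hL, Finset.sum_range_succ]
  have hstep : ∀ t, ∑ k, w t k * Real.exp (-η * ℓ t k) = Z (t+1) / Z t := by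
    intro t
    simp only [hZdef]
    have hterm : ∀ k : Fin K, w t k * Real.exp (-η * ℓ t k)
        = Real.exp (-η * L (t+1) k) / (∑ k', Real.exp (-η * L t k')) := by
      intro k
      rw [hw, hLsucc, div_mul_eq_mul_div, ← Real.exp_add]
      congr 2
      ring
    rw [Finset.sum_congr rfl (fun k _ => hterm k), ← Finset.sum_div]
  have hlogstep : ∀ t, Real.log (∑ k, w t k * Real.exp (-η * ℓ t k))
      = Real.log (Z (t+1)) - Real.log (Z t) := by
    intro t
    rw [hstep t, Real.log_div (hZpos (t+1)).ne' (hZpos t).ne']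
  have hZ0 : Z 0 = K := by
    simp [hZdef, hL]
  obtain ⟨k0, -, hk0⟩ := Finset.exists_mem_eq_inf' hne (L T)
  have hLstar' : Lstar = L T k0 := by rw [hLstar]; exact hk0
  have hZTge : Real.exp (-η * Lstar) ≤ Z T := by
    simp only [hZdef]
    calc Real.exp (-η * Lstar) = Real.exp (-η * L T k0) := by rw [hLstar']
    _ ≤ ∑ k', Real.exp (-η * L T k') :=
        Finset.single_le_sum (fun k _ => (Real.exp_pos (-η * L T k)).le) (Finset.mem_univ k0)
  have hlogZT : -η * Lstar ≤ Real.log (Z T) := by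
    calc -η * Lstar = Real.log (Real.exp (-η * Lstar)) := (Real.log_exp _).symm
    _ ≤ Real.log (Z T) := Real.log_le_log (Real.exp_pos _) hZTge
  have hkey : (Real.exp 1 - 1) * η ≤ (Real.exp 1 - 1 + η) * (1 - Real.exp (-η)) :=
    key_ineq η hη0 hη1
  set hh : ℕ → ℝ := fun t => ∑ k, w t k * ℓ t k with hhdef
  set m : ℕ → ℝ := fun t => -(1/η) * Real.log (∑ k, w t k * Real.exp (-η * ℓ t k)) with hmdef
  have hh0 : ∀ t, 0 ≤ hh t := fun t =>
    Finset.sum_nonneg fun k _ => mul_nonneg (hwpos t k).le (hℓ t k).1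
  have hper : ∀ t, 0 ≤ m t ∧ hh t - m t ≤ (η/(Real.exp 1 - 1)) * m t := by
    intro t
    have hPpos : 0 < ∑ k, w t k * Real.exp (-η * ℓ t k) :=
      Finset.sum_pos (fun k _ => mul_pos (hwpos t k) (Real.exp_pos _)) hne
    have hexple : ∀ k : Fin K, Real.exp (-η * ℓ t k) ≤ 1 - (1 - Real.exp (-η)) * ℓ t k := by
      intro k
      have hcv := convexOn_exp.2 (Set.mem_univ (-η)) (Set.mem_univ (0:ℝ))
        (hℓ t k).1 (show (0:ℝ) ≤ 1 - ℓ t k by linarith [(hℓ t k).2])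
        (show ℓ t k + (1 - ℓ t k) = 1 by ring)
      simp only [smul_eq_mul, mul_zero, add_zero, Real.exp_zero, mul_one] at hcv
      calc Real.exp (-η * ℓ t k) = Real.exp (ℓ t k * -η) := by rw [mul_comm]
      _ ≤ ℓ t k * Real.exp (-η) + (1 - ℓ t k) := hcv
      _ = 1 - (1 - Real.exp (-η)) * ℓ t k := by ring
    have hPle : (∑ k, w t k * Real.exp (-η * ℓ t k)) ≤ 1 - (1 - Real.exp (-η)) * hh t := by
      calc (∑ k, w t k * Real.exp (-η * ℓ t k))
          ≤ ∑ k, w t k * (1 - (1 - Real.exp (-η)) * ℓ t k) :=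
            Finset.sum_le_sum fun k _ => mul_le_mul_of_nonneg_left (hexple k) (hwpos t k).le
      _ = (∑ k, w t k) - (1 - Real.exp (-η)) * ∑ k, w t k * ℓ t k := by
          rw [Finset.mul_sum, ← Finset.sum_sub_distrib]
          exact Finset.sum_congr rfl fun k _ => by ring
      _ = 1 - (1 - Real.exp (-η)) * hh t := by rw [hw1 t]
    have hlogP : Real.log (∑ k, w t k * Real.exp (-η * ℓ t k))
        ≤ -((1 - Real.exp (-η)) * hh t) := by
      calc Real.log (∑ k, w t k * Real.exp (-η * ℓ t k))
          ≤ (∑ k, w t k * Real.exp (-η * ℓ t k)) - 1 := Real.log_le_sub_one_of_pos hPpos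
      _ ≤ -((1 - Real.exp (-η)) * hh t) := by linarith
    have hc0 : 0 ≤ 1 - Real.exp (-η) := by
      have : Real.exp (-η) ≤ 1 := Real.exp_le_one_iff.2 (by linarith)
      linarith
    have hmval : m t = -(1/η) * Real.log (∑ k, w t k * Real.exp (-η * ℓ t k)) := rfl
    have hm0 : 0 ≤ m t := by
      have hlP : Real.log (∑ k, w t k * Real.exp (-η * ℓ t k)) ≤ 0 :=
        le_trans hlogP (by nlinarith [hh0 t])
      rw [hmval]
      have : 0 ≤ (1/η) * (-Real.log (∑ k, w t k * Real.exp (-η * ℓ t k))) :=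
        mul_nonneg (by positivity) (by linarith)
      linarith
    have hm1 : (1 - Real.exp (-η)) * hh t ≤ η * m t := by
      have hmt : η * m t = -Real.log (∑ k, w t k * Real.exp (-η * ℓ t k)) := by
        rw [hmval]; field_simp
      rw [hmt]; linarith
    refine ⟨hm0, ?_⟩
    have hmain : (Real.exp 1 - 1) * hh t ≤ (Real.exp 1 - 1 + η) * m t := by
      nlinarith [mul_le_mul_of_nonneg_left hm1 (show (0:ℝ) ≤ Real.exp 1 - 1 + η by linarith),
        mul_le_mul_of_nonneg_right hkey (hh0 t), hm0, hη0]
    rw [div_mul_eq_mul_div, le_div_iff₀ hepos]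
    nlinarith [hmain]
  set S := ∑ t ∈ Finset.range T, m t with hSdef
  have hΔeq : Δ = (∑ t ∈ Finset.range T, hh t) - S := by
    rw [hΔ, hSdef, ← Finset.sum_sub_distrib]
    exact Finset.sum_congr rfl fun t _ => by
      have hmval : m t = -(1/η) * Real.log (∑ k, w t k * Real.exp (-η * ℓ t k)) := rfl
      rw [hmval]; ring
  have hSval : S = (1/η) * (Real.log K - Real.log (Z T)) := by
    rw [hSdef]
    have hmv : ∀ t, m t = -(1/η) * (Real.log (Z (t+1)) - Real.log (Z t)) := by
      intro t
      have hmval : m t = -(1/η) * Real.log (∑ k, w t k * Real.exp (-η * ℓ t k)) := rfl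
      rw [hmval, hlogstep t]
    rw [Finset.sum_congr rfl fun t _ => hmv t, ← Finset.mul_sum,
      Finset.sum_range_sub (fun t => Real.log (Z t)) T, hZ0]
    ring
  have hSle : S ≤ Lstar + Real.log K / η := by
    rw [hSval]
    have h1 : Real.log K - Real.log (Z T) ≤ Real.log K + η * Lstar := by linarith
    calc (1/η) * (Real.log K - Real.log (Z T)) ≤ (1/η) * (Real.log K + η * Lstar) :=
      mul_le_mul_of_nonneg_left h1 (by positivity)
    _ = Lstar + Real.log K / η := by field_simp; ring
  have hΔup : Δ ≤ (η * Lstar + Real.log K) / (Real.exp 1 - 1) := by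
    have h1 : Δ ≤ (η/(Real.exp 1 - 1)) * S := by
      rw [hΔeq, hSdef, ← Finset.sum_sub_distrib]
      calc ∑ t ∈ Finset.range T, (hh t - m t)
          ≤ ∑ t ∈ Finset.range T, (η/(Real.exp 1 - 1)) * m t :=
            Finset.sum_le_sum fun t _ => (hper t).2
      _ = (η/(Real.exp 1 - 1)) * ∑ t ∈ Finset.range T, m t := by rw [Finset.mul_sum]
    calc Δ ≤ (η/(Real.exp 1 - 1)) * S := h1
    _ ≤ (η/(Real.exp 1 - 1)) * (Lstar + Real.log K / η) :=
        mul_le_mul_of_nonneg_left hSle (by positivity)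
    _ = (η * Lstar + Real.log K) / (Real.exp 1 - 1) := by field_simp
  -- Part 1
  have h1 : Real.log K / η ≤ η * Lstar / (Real.exp 1 - 1) := by
    have h2 := hist.trans hΔup
    have e1 : (1/η + 1/(Real.exp 1 - 1)) * Real.log K
        = Real.log K / η + Real.log K / (Real.exp 1 - 1) := by ring
    have e2 : (η * Lstar + Real.log K) / (Real.exp 1 - 1)
        = η * Lstar / (Real.exp 1 - 1) + Real.log K / (Real.exp 1 - 1) := by ring
    rw [e1, e2] at h2
    linarith
  rw [div_le_div_iff₀ hη0 hepos] at h1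
  have hsq : (Real.exp 1 - 1) * Real.log K ≤ η^2 * Lstar := by
    calc (Real.exp 1 - 1) * Real.log K = Real.log K * (Real.exp 1 - 1) := by ring
    _ ≤ η * Lstar * η := h1
    _ = η^2 * Lstar := by ring
  have hLpos : 0 < Lstar := by
    by_contra hneg
    push_neg at hneg
    have h2 : η^2 * Lstar ≤ 0 := mul_nonpos_of_nonneg_of_nonpos (sq_nonneg η) hneg
    have h3 : 0 < (Real.exp 1 - 1) * Real.log K := mul_pos hepos hlogK
    linarith
  have harg : (Real.exp 1 - 1) * Real.log K / Lstar ≤ η^2 :=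
    (div_le_iff₀ hLpos).2 hsq
  have part1 : Real.sqrt ((Real.exp 1 - 1) * Real.log K / Lstar) ≤ η := by
    calc Real.sqrt ((Real.exp 1 - 1) * Real.log K / Lstar) ≤ Real.sqrt (η^2) :=
      Real.sqrt_le_sqrt harg
    _ = η := Real.sqrt_sq hη0.le
  refine ⟨part1, ?_⟩
  -- Part 2
  have hsum : (∑ t ∈ Finset.range T, hh t) - Lstar ≤ Δ + Real.log K / η := by
    linarith [hΔeq, hSle]
  have hRrt : 2 * Real.log K / η ≤ Real.sqrt (4/(Real.exp 1 - 1) * Lstar * Real.log K) := by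
    rw [Real.le_sqrt (by positivity) (by positivity)]
    rw [div_pow, div_le_iff₀ (by positivity : (0:ℝ) < η^2)]
    rw [show (4:ℝ)/(Real.exp 1 - 1) * Lstar * Real.log K * η^2
        = 4 * Lstar * Real.log K * η^2 / (Real.exp 1 - 1) by ring, le_div_iff₀ hepos]
    calc (2*Real.log K)^2 * (Real.exp 1 - 1)
        = 4*Real.log K * ((Real.exp 1 - 1) * Real.log K) := by ring
    _ ≤ 4*Real.log K * (η^2*Lstar) :=
        mul_le_mul_of_nonneg_left hsq (by positivity)
    _ = 4 * Lstar * Real.log K * η^2 := by ring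
  have hfin : Δ + Real.log K / η < 2 * Real.log K / η + Real.log K / (Real.exp 1 - 1) + η/8 := by
    have e1 : (1/η + 1/(Real.exp 1 - 1)) * Real.log K
        = Real.log K / η + Real.log K / (Real.exp 1 - 1) := by ring
    rw [e1] at hist'
    have e3 : 2 * Real.log K / η = Real.log K / η + Real.log K / η := by ring
    linarith
  calc (∑ t ∈ Finset.range T, hh t) - Lstar
      ≤ Δ + Real.log K / η := hsum
  _ < 2*Real.log K/η + Real.log K/(Real.exp 1 - 1) + η/8 := hfin
  _ ≤ Real.sqrt (4/(Real.exp 1 - 1)*Lstar*Real.log K) + Real.log K/(Real.exp 1 - 1) + 1/8 := by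
      linarith
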